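/- The canonical projection π_{n,J} commutes with shifts by elements of 𝔖_n: for all N > n, all h ∈ 𝔖_N, and all g₁, g₂ ∈ 𝔖_n, one has π_n(g₁⁻¹ h g₂) = g₁⁻¹ π_n(h) g₂, where π_n : 𝔖_N → 𝔖_n removes elements n+1, ..., N from the cycles. -/
import Mathlib


/-- The induced permutation `π_n(w)` of `w ∈ 𝔖_N` on `{0, …, n-1}`, extended by the
identity on `{n, …, N-1}`: for `a < n`, `π_n(w)(a) = w^m(a)` for the least `m ≥ 1`
with `w^m(a) < n` (i.e. remove the elements `≥ n` from the cycles of `w`). -/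
noncomputable def induced {N : ℕ} (n : ℕ) (w : Equiv.Perm (Fin N)) (a : Fin N) :
    Fin N :=
  if h : (a : ℕ) < n then
    (w ^ Nat.find (p := fun m => 0 < m ∧ (((w ^ m) a : Fin N) : ℕ) < n)
      ⟨orderOf w, orderOf_pos w, by simp [pow_orderOf_eq_one]; exact h⟩) a
  else a

lemma induced_eq_of {N n : ℕ} (w : Equiv.Perm (Fin N)) (a : Fin N) (ha : (a : ℕ) < n)
    (m : ℕ) (hm : 0 < m) (hlt : (((w ^ m) a : Fin N) : ℕ) < n)
    (hmin : ∀ k, 0 < k → k < m → n ≤ (((w ^ k) a : Fin N) : ℕ)) :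
    induced n w a = (w ^ m) a := by
  rw [induced, dif_pos ha]
  have : Nat.find (p := fun m => 0 < m ∧ (((w ^ m) a : Fin N) : ℕ) < n)
      ⟨orderOf w, orderOf_pos w, by simp [pow_orderOf_eq_one]; exact ha⟩ = m := by
    rw [Nat.find_eq_iff]
    exact ⟨⟨hm, hlt⟩, fun k hk hc => absurd hc.2 (not_lt.2 (hmin k hc.1 hk))⟩
  rw [this]

theorem stmt_17 (n N : ℕ) (hnN : n < N) (h g₁ g₂ : Equiv.Perm (Fin N))
    (hg₁ : ∀ a : Fin N, n ≤ (a : ℕ) → g₁ a = a)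
    (hg₂ : ∀ a : Fin N, n ≤ (a : ℕ) → g₂ a = a) :
    ∀ a : Fin N, induced n (g₁⁻¹ * h * g₂) a = g₁⁻¹ (induced n h (g₂ a)) := by
  have hg₁' : ∀ a : Fin N, n ≤ (a : ℕ) → g₁⁻¹ a = a := by
    intro a ha
    rw [Equiv.Perm.inv_eq_iff_eq]
    exact (hg₁ a ha).symm
  have hltp : ∀ (g : Equiv.Perm (Fin N)), (∀ a : Fin N, n ≤ (a : ℕ) → g a = a) →
      ∀ a : Fin N, (a : ℕ) < n → ((g a : Fin N) : ℕ) < n := by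
    intro g hg a ha
    by_contra hge
    push_neg at hge
    have h1 : g (g a) = g a := hg (g a) hge
    have h2 : g a = a := g.injective h1
    rw [h2] at hge
    omega
  intro a
  by_cases ha : (a : ℕ) < n
  · have hb : ((g₂ a : Fin N) : ℕ) < n := hltp g₂ hg₂ a ha
    -- key iteration lemma
    have key : ∀ m : ℕ, 0 < m →
        (∀ k, 0 < k → k < m → n ≤ (((h ^ k) (g₂ a) : Fin N) : ℕ)) →
        ((g₁⁻¹ * h * g₂) ^ m) a = g₁⁻¹ ((h ^ m) (g₂ a)) := by
      intro m
      induction m with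
      | zero => intro h0; omega
      | succ m ih =>
        intro _ hmid
        rcases Nat.eq_zero_or_pos m with hm0 | hm0
        · subst hm0
          simp [Equiv.Perm.mul_apply]
        · have hge : n ≤ (((h ^ m) (g₂ a) : Fin N) : ℕ) :=
            hmid m hm0 (Nat.lt_succ_self m)
          have ihm : ((g₁⁻¹ * h * g₂) ^ m) a = g₁⁻¹ ((h ^ m) (g₂ a)) :=
            ih hm0 (fun k hk0 hk => hmid k hk0 (hk.trans (Nat.lt_succ_self m)))
          rw [pow_succ', Equiv.Perm.mul_apply, ihm, hg₁' _ hge,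
            pow_succ' h, Equiv.Perm.mul_apply]
          simp only [Equiv.Perm.mul_apply]
          rw [hg₂ _ hge]
    -- minimal return time for h at g₂ a
    have hex : ∃ m, 0 < m ∧ (((h ^ m) (g₂ a) : Fin N) : ℕ) < n :=
      ⟨orderOf h, orderOf_pos h, by simp [pow_orderOf_eq_one]; exact hb⟩
    obtain ⟨m₀, hm₀pos, hm₀lt, hm₀min⟩ :
        ∃ m, 0 < m ∧ (((h ^ m) (g₂ a) : Fin N) : ℕ) < n ∧
          ∀ k, 0 < k → k < m → n ≤ (((h ^ k) (g₂ a) : Fin N) : ℕ) := by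
      refine ⟨Nat.find hex, (Nat.find_spec hex).1, (Nat.find_spec hex).2,
        fun k hk0 hk => ?_⟩
      by_contra hc
      push_neg at hc
      exact Nat.find_min hex hk ⟨hk0, hc⟩
    have hwm : ((g₁⁻¹ * h * g₂) ^ m₀) a = g₁⁻¹ ((h ^ m₀) (g₂ a)) :=
      key m₀ hm₀pos hm₀min
    have hwlt : ((((g₁⁻¹ * h * g₂) ^ m₀) a : Fin N) : ℕ) < n := by
      rw [hwm]
      exact hltp g₁⁻¹ hg₁' _ hm₀lt
    have hwmin : ∀ k, 0 < k → k < m₀ →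
        n ≤ ((((g₁⁻¹ * h * g₂) ^ k) a : Fin N) : ℕ) := by
      intro k hk0 hk
      have := key k hk0 (fun j hj0 hj => hm₀min j hj0 (hj.trans hk))
      rw [this, hg₁' _ (hm₀min k hk0 hk)]
      exact hm₀min k hk0 hk
    rw [induced_eq_of _ _ ha m₀ hm₀pos hwlt hwmin,
      induced_eq_of _ _ hb m₀ hm₀pos hm₀lt hm₀min, hwm]
  · push_neg at ha
    rw [induced, dif_neg (not_lt.2 ha), hg₂ a ha, induced, dif_neg (not_lt.2 ha),
      hg₁' a ha]
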